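/- In the polynomial ring ℝ[x₁,y₁,p₁,q₁,x₂,y₂,p₂,q₂,x₃,y₃,p₃,q₃] (12 variables), the four polynomials ζ₁₂, ζ₂₃, ζ₁₃ and τ := Δ₁₂₃·δ₁₂₃ are algebraically independent over ℝ. -/

import Mathlib

open MvPolynomial

/-- The gradient line of the `i`-th point, with polynomial entries: the variables
`(i,0), (i,1), (i,2), (i,3)` are `xᵢ, yᵢ, pᵢ, qᵢ` respectively. -/
noncomputable def glP {n : ℕ} (i : Fin n) : Fin 3 → MvPolynomial (Fin n × Fin 4) ℝ :=
  ![X (i, 2), X (i, 3), -(X (i, 2) * X (i, 0)) - X (i, 3) * X (i, 1)]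

/-- The joint invariant `ζᵢⱼ = (pᵢ(xᵢ−xⱼ)+qᵢ(yᵢ−yⱼ))·(pⱼ(xᵢ−xⱼ)+qⱼ(yᵢ−yⱼ))` as a polynomial. -/
noncomputable def zetaP {n : ℕ} (i j : Fin n) : MvPolynomial (Fin n × Fin 4) ℝ :=
  (X (i, 2) * (X (i, 0) - X (j, 0)) + X (i, 3) * (X (i, 1) - X (j, 1))) *
    (X (j, 2) * (X (i, 0) - X (j, 0)) + X (j, 3) * (X (i, 1) - X (j, 1)))

/-- `Δᵢⱼₖ = det(ℓᵢ, ℓⱼ, ℓₖ)`, determinant of the matrix with rows the gradient lines. -/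
noncomputable def DeltaP {n : ℕ} (i j k : Fin n) : MvPolynomial (Fin n × Fin 4) ℝ :=
  Matrix.det (Matrix.of ![glP i, glP j, glP k])

/-- `δᵢⱼₖ = det(Aᵢ, Aⱼ, Aₖ)`, with columns `Aᵢ = (xᵢ, yᵢ, 1)ᵀ`. -/
noncomputable def deltaP {n : ℕ} (i j k : Fin n) : MvPolynomial (Fin n × Fin 4) ℝ :=
  Matrix.det (Matrix.of
    ![![X (i, 0), X (j, 0), X (k, 0)], ![X (i, 1), X (j, 1), X (k, 1)], ![1, 1, 1]])

/-! ### Auxiliary setup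

We specialize the twelve variables to explicit values in
`S3 := Polynomial (MvPolynomial (Fin 3) ℝ)`, where the images of the four invariants become
`(C (X 0), C (X 1), C (X 0 * X 1) * Y ^ 2 + C (X 2) * Y, C (X 2))` (with `Y = Polynomial.X`).
The third one is transcendental over the subalgebra generated by the other three, so the four
images are algebraically independent; hence so are the original invariants. -/

section Aux

/-- Polynomials in three variables over `ℝ`. -/
abbrev R3 : Type := MvPolynomial (Fin 3) ℝ

/-- Univariate polynomials over `R3`. -/
abbrev S3 : Type := Polynomial R3

/-- The element `c·d + a·b·d²` (with `d = Polynomial.X`), written in "quadratic" normal form. -/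
noncomputable def wP : S3 :=
  Polynomial.C (X 0 * X 1) * Polynomial.X ^ 2 + Polynomial.C (X 2) * Polynomial.X +
    Polynomial.C 0

/-- The three "constant" variables `a = C (X 0)`, `b = C (X 1)`, `c = C (X 2)` of `S3`. -/
noncomputable def x3 : Fin 3 → S3 := fun i => Polynomial.C (X i)

lemma hx3 : AlgebraicIndependent ℝ x3 :=
  (MvPolynomial.algebraicIndependent_X (Fin 3) ℝ).map'
    (f := Polynomial.CAlgHom (R := ℝ) (A := R3)) Polynomial.C_injective

lemma hw_trans_R3 : Transcendental R3 wP := by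
  have h01 : (X 0 * X 1 : R3) ≠ 0 :=
    mul_ne_zero (MvPolynomial.X_ne_zero _) (MvPolynomial.X_ne_zero _)
  refine Polynomial.transcendental _ ?_ ?_
  · rw [wP, Polynomial.natDegree_quadratic h01]; norm_num
  · rw [wP, Polynomial.leadingCoeff_quadratic h01]
    exact mem_nonZeroDivisors_of_ne_zero h01

lemma hw_trans : Transcendental (Algebra.adjoin ℝ (Set.range x3)) wP := by
  have hC : Function.Injective (Polynomial.CAlgHom (R := ℝ) (A := R3)) :=
    Polynomial.C_injective
  have h1 : Transcendental (Polynomial.CAlgHom (R := ℝ) (A := R3)).range wP := by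
    refine hw_trans_R3.ringHom_of_comp_eq
      (AlgEquiv.ofInjective (Polynomial.CAlgHom (R := ℝ) (A := R3)) hC)
      (RingHom.id S3) (AlgEquiv.surjective _) Function.injective_id (RingHom.ext fun r => ?_)
    simp [AlgEquiv.ofInjective_apply, Polynomial.algebraMap_eq, Subalgebra.algebraMap_eq]
  refine h1.of_tower_top_of_subalgebra_le (Algebra.adjoin_le ?_)
  rintro s ⟨i, rfl⟩
  exact ⟨X i, rfl⟩

lemma indep4 :
    AlgebraicIndependent ℝ
      (![Polynomial.C (X 0), Polynomial.C (X 1), wP, Polynomial.C (X 2)] : Fin 4 → S3) := by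
  have hopt : AlgebraicIndependent ℝ (fun o : Option (Fin 3) => o.elim wP x3) :=
    (hx3.option_iff_transcendental wP).2 hw_trans
  have h := hopt.comp (![some 0, some 1, none, some 2] : Fin 4 → Option (Fin 3)) (by decide)
  convert h using 1
  funext i
  fin_cases i <;> rfl

/-- The specialization of the twelve variables: points `(0,0)`, `(1,0)`, `(0,1)` with gradients
`(a, c + a·b·d)`, `(1, 1 + b)`, `(d − 1, d)` where `a = C (X 0)`, `b = C (X 1)`, `c = C (X 2)`,
`d = Polynomial.X`. -/
noncomputable def asg : Fin 3 × Fin 4 → S3 := fun p =>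
  ![![0, 0, Polynomial.C (X 0), Polynomial.C (X 2) + Polynomial.C (X 0 * X 1) * Polynomial.X],
    ![1, 0, 1, 1 + Polynomial.C (X 1)],
    ![0, 1, Polynomial.X - 1, Polynomial.X]] p.1 p.2

end Aux

/-- For three points, the invariants `ζ₁₂, ζ₂₃, ζ₁₃, τ` are algebraically independent. -/
theorem three_point_invariants_algebraically_independent :
    AlgebraicIndependent ℝ
      (![zetaP (0 : Fin 3) 1, zetaP (1 : Fin 3) 2, zetaP (0 : Fin 3) 2, DeltaP (0 : Fin 3) 1 2 * deltaP (0 : Fin 3) 1 2] :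
        Fin 4 → MvPolynomial (Fin 3 × Fin 4) ℝ) := by
  refine AlgebraicIndependent.of_comp (MvPolynomial.aeval asg) ?_
  have h : ⇑(MvPolynomial.aeval asg) ∘
      (![zetaP (0 : Fin 3) 1, zetaP (1 : Fin 3) 2, zetaP (0 : Fin 3) 2,
         DeltaP (0 : Fin 3) 1 2 * deltaP (0 : Fin 3) 1 2] :
        Fin 4 → MvPolynomial (Fin 3 × Fin 4) ℝ) =
      ![Polynomial.C (X 0), Polynomial.C (X 1), wP, Polynomial.C (X 2)] := by
    funext i
    fin_cases i <;>
      simp [zetaP, DeltaP, deltaP, glP, Matrix.det_fin_three, asg, wP, Function.comp] <;>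
      ring
  rw [h]
  exact indep4
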